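/- Let d ≥ 2 and 0 ≤ p ≤ 1, let E(ρ) = (1−p)·ρ + (p/d)·Tr(ρ)·1 be the d-dimensional depolarizing channel, and let U be a d×d unitary matrix. Then for every real s ≥ 1 and every pair of quantum channels W, M on d×d complex matrices satisfying UρU† = s·E(W(ρ)) − (s−1)·M(ρ) for all ρ, one has s − 1 ≥ (d²−1)p/(d² + p − d²p). (This is the lower bound of Theorem 2 for d-dimensional depolarizing noise; together with the matching feasible decomposition it gives R⁺_depol(U) = (d²−1)p/(d² + p − d²p).) -/

import Mathlib

open Matrix

/-- A quantum channel (CPTP map) on `d×d` complex matrices: a map admitting a finite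
family of Kraus operators `K i` with `∑ Kᴴ K = 1`. -/
def IsQuantumChannel {d : ℕ} (F : Matrix (Fin d) (Fin d) ℂ → Matrix (Fin d) (Fin d) ℂ) : Prop :=
  ∃ (k : ℕ) (K : Fin k → Matrix (Fin d) (Fin d) ℂ),
    (∑ i, (K i)ᴴ * K i) = 1 ∧ ∀ ρ, F ρ = ∑ i, K i * ρ * (K i)ᴴ

lemma entry_lemma {d : ℕ} (A B : Matrix (Fin d) (Fin d) ℂ) (i j : Fin d) :
    (A * (Matrix.single i j (1:ℂ)) * B) i j = A i i * B j j := by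
  rw [mul_assoc, mul_apply]
  simp [mul_apply, Matrix.single, ite_and, Finset.mul_sum]

/-- Cauchy–Schwarz for the Frobenius inner product. -/
lemma cs_lemma {d : ℕ} (A B : Matrix (Fin d) (Fin d) ℂ) :
    Complex.normSq (trace (Aᴴ * B)) ≤
      (∑ i, ∑ j, Complex.normSq (A i j)) * (∑ i, ∑ j, Complex.normSq (B i j)) := by
  have htr : trace (Aᴴ * B) = ∑ x : Fin d × Fin d, (starRingEnd ℂ) (A x.2 x.1) * B x.2 x.1 := by
    rw [trace, Fintype.sum_prod_type]
    simp [Matrix.diag, mul_apply, conjTranspose_apply]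
  have habs : ‖trace (Aᴴ * B)‖ ≤
      ∑ x : Fin d × Fin d, ‖A x.2 x.1‖ * ‖B x.2 x.1‖ := by
    rw [htr]
    refine (norm_sum_le _ _).trans_eq ?_
    simp
  have h1 : Complex.normSq (trace (Aᴴ * B)) = ‖trace (Aᴴ * B)‖ ^ 2 :=
    (Complex.sq_norm _).symm
  rw [h1]
  have h2 : (∑ x : Fin d × Fin d, ‖A x.2 x.1‖ * ‖B x.2 x.1‖) ^ 2 ≤
      (∑ x : Fin d × Fin d, ‖A x.2 x.1‖ ^ 2) *
        (∑ x : Fin d × Fin d, ‖B x.2 x.1‖ ^ 2) :=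
    Finset.sum_mul_sq_le_sq_mul_sq _ _ _
  have h3 : ‖trace (Aᴴ * B)‖ ^ 2 ≤
      (∑ x : Fin d × Fin d, ‖A x.2 x.1‖ ^ 2) *
        (∑ x : Fin d × Fin d, ‖B x.2 x.1‖ ^ 2) := by
    refine le_trans (pow_le_pow_left₀ (norm_nonneg _) habs 2) h2
  refine h3.trans_eq ?_
  congr 1
  · rw [Fintype.sum_prod_type, Finset.sum_comm]
    simp [Complex.sq_norm]
  · rw [Fintype.sum_prod_type, Finset.sum_comm]
    simp [Complex.sq_norm]

/-- `F` value of a Kraus channel. -/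
lemma channel_F {d k : ℕ} (U : Matrix (Fin d) (Fin d) ℂ)
    (K : Fin k → Matrix (Fin d) (Fin d) ℂ) :
    (∑ i, ∑ j, ((Uᴴ * (∑ κ, K κ * Matrix.single i j (1:ℂ) * (K κ)ᴴ) * U
        : Matrix (Fin d) (Fin d) ℂ)) i j)
      = ((∑ κ, Complex.normSq (trace (Uᴴ * K κ)) : ℝ) : ℂ) := by
  have key : ∀ i j : Fin d, ((Uᴴ * (∑ κ, K κ * Matrix.single i j (1:ℂ) * (K κ)ᴴ) * U
        : Matrix (Fin d) (Fin d) ℂ)) i j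
      = ∑ κ, (Uᴴ * K κ) i i * ((K κ)ᴴ * U) j j := by
    intro i j
    rw [Finset.mul_sum, Finset.sum_mul, Matrix.sum_apply]
    refine Finset.sum_congr rfl fun κ _ => ?_
    have h : Uᴴ * (K κ * Matrix.single i j (1:ℂ) * (K κ)ᴴ) * U
        = (Uᴴ * K κ) * Matrix.single i j (1:ℂ) * ((K κ)ᴴ * U) := by
      simp only [mul_assoc]
    rw [h, entry_lemma]
  simp_rw [key]
  have h1 : ∀ i : Fin d, (∑ j, ∑ κ, (Uᴴ * K κ) i i * ((K κ)ᴴ * U) j j)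
      = ∑ κ, ∑ j, (Uᴴ * K κ) i i * ((K κ)ᴴ * U) j j := fun i => Finset.sum_comm
  simp_rw [h1]
  rw [Finset.sum_comm]
  have hκ : ∀ κ, ∑ i, ∑ j, (Uᴴ * K κ) i i * ((K κ)ᴴ * U) j j
      = trace (Uᴴ * K κ) * trace ((K κ)ᴴ * U) := by
    intro κ
    rw [trace, trace, Finset.sum_mul_sum]
    rfl
  simp_rw [hκ]
  have h2 : ∀ κ, trace ((K κ)ᴴ * U) = (starRingEnd ℂ) (trace (Uᴴ * K κ)) := by
    intro κ
    have h : (K κ)ᴴ * U = (Uᴴ * K κ)ᴴ := by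
      rw [conjTranspose_mul, conjTranspose_conjTranspose]
    rw [h, trace_conjTranspose]
    rfl
  simp_rw [h2, Complex.mul_conj]
  push_cast
  rfl

lemma channel_trace {d : ℕ} {W : Matrix (Fin d) (Fin d) ℂ → Matrix (Fin d) (Fin d) ℂ}
    (hW : IsQuantumChannel W) (ρ : Matrix (Fin d) (Fin d) ℂ) : trace (W ρ) = trace ρ := by
  obtain ⟨k, K, hK1, hK2⟩ := hW
  rw [hK2, trace_sum]
  have h : ∀ κ, trace (K κ * ρ * (K κ)ᴴ) = trace ((K κ)ᴴ * K κ * ρ) := by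
    intro κ
    rw [trace_mul_cycle, mul_assoc]
  simp_rw [h, ← trace_sum, ← Finset.sum_mul, hK1, one_mul]

/-- sum of normSq of entries of Kraus operators is d -/
lemma kraus_normSq_sum {d k : ℕ} {K : Fin k → Matrix (Fin d) (Fin d) ℂ}
    (hK1 : (∑ i, (K i)ᴴ * K i) = 1) :
    (∑ κ, ∑ i, ∑ j, Complex.normSq (K κ i j)) = d := by
  have h : (((∑ κ, ∑ i, ∑ j, Complex.normSq (K κ i j)) : ℝ) : ℂ) = (d : ℂ) := by
    have ht := congrArg trace hK1
    rw [trace_sum, trace_one] at ht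
    simp only [Fintype.card_fin] at ht
    rw [← ht]
    push_cast
    refine Finset.sum_congr rfl fun κ _ => ?_
    rw [trace, Finset.sum_comm]
    simp only [Matrix.diag, mul_apply, conjTranspose_apply]
    refine Finset.sum_congr rfl fun i _ => Finset.sum_congr rfl fun j _ => ?_
    rw [Complex.normSq_eq_conj_mul_self]
    rfl
  exact_mod_cast h

theorem d_dim_depolarizing_robustness_lower_bound (d : ℕ) (hd : 2 ≤ d)
    (p : ℝ) (hp0 : 0 ≤ p) (hp1 : p ≤ 1)
    (E : Matrix (Fin d) (Fin d) ℂ → Matrix (Fin d) (Fin d) ℂ)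
    (hE : ∀ ρ, E ρ = ((1 - p : ℝ) : ℂ) • ρ + (((p / d : ℝ) : ℂ) * ρ.trace) • (1 : Matrix (Fin d) (Fin d) ℂ))
    (U : Matrix (Fin d) (Fin d) ℂ) (hU : U ∈ Matrix.unitaryGroup (Fin d) ℂ)
    (s : ℝ) (hs : 1 ≤ s)
    (W M : Matrix (Fin d) (Fin d) ℂ → Matrix (Fin d) (Fin d) ℂ)
    (hW : IsQuantumChannel W) (hM : IsQuantumChannel M)
    (hdecomp : ∀ ρ, U * ρ * Uᴴ = (s : ℂ) • E (W ρ) - ((s : ℂ) - 1) • M ρ) :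
    s - 1 ≥ ((d : ℝ) ^ 2 - 1) * p / ((d : ℝ) ^ 2 + p - (d : ℝ) ^ 2 * p) := by
  obtain ⟨kW, KW, hKW1, hKW2⟩ := hW
  obtain ⟨kM, KM, hKM1, hKM2⟩ := hM
  have hUU : Uᴴ * U = 1 := by
    have h := hU.1
    rwa [Matrix.star_eq_conjTranspose] at h
  set rW : ℝ := ∑ κ, Complex.normSq (trace (Uᴴ * KW κ)) with hrWdef
  set rM : ℝ := ∑ κ, Complex.normSq (trace (Uᴴ * KM κ)) with hrMdef
  have hrW0 : 0 ≤ rW := Finset.sum_nonneg fun κ _ => Complex.normSq_nonneg _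
  have hrM0 : 0 ≤ rM := Finset.sum_nonneg fun κ _ => Complex.normSq_nonneg _
  -- Frobenius norm of U
  have hUnorm : (∑ i, ∑ j, Complex.normSq (U i j)) = d := by
    have h1 : (∑ κ : Fin 1, ∑ i, ∑ j, Complex.normSq (U i j)) = d :=
      kraus_normSq_sum (K := fun _ : Fin 1 => U) (by simpa using hUU)
    simpa using h1
  have hrWd : rW ≤ (d:ℝ)^2 := by
    have h1 : rW ≤ ∑ κ, (∑ i, ∑ j, Complex.normSq (U i j)) *
        (∑ i, ∑ j, Complex.normSq (KW κ i j)) :=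
      Finset.sum_le_sum fun κ _ => cs_lemma U (KW κ)
    have h2 : (∑ κ, (∑ i, ∑ j, Complex.normSq (U i j)) *
        (∑ i, ∑ j, Complex.normSq (KW κ i j))) = (d:ℝ) * (d:ℝ) := by
      rw [← Finset.mul_sum, hUnorm, kraus_normSq_sum hKW1]
    calc rW ≤ _ := h1
      _ = (d:ℝ) * (d:ℝ) := h2
      _ = (d:ℝ)^2 := by ring
  -- the left-hand side of the summed decomposition
  have hL : ∀ i j : Fin d, ((Uᴴ * (U * Matrix.single i j (1:ℂ) * Uᴴ) * U
      : Matrix (Fin d) (Fin d) ℂ)) i j = 1 := by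
    intro i j
    have h : Uᴴ * (U * Matrix.single i j (1:ℂ) * Uᴴ) * U
        = (Uᴴ * U) * Matrix.single i j (1:ℂ) * (Uᴴ * U) := by
      simp only [mul_assoc]
    rw [h, hUU, one_mul, mul_one]
    simp
  -- pointwise expansion of the right-hand side
  have hRpoint : ∀ i j : Fin d,
      ((Uᴴ * ((s:ℂ) • E (W (Matrix.single i j (1:ℂ))) - ((s:ℂ)-1) • M (Matrix.single i j (1:ℂ))) * U
        : Matrix (Fin d) (Fin d) ℂ)) i j
      = (s:ℂ) * (((1-p:ℝ):ℂ) * ((Uᴴ * W (Matrix.single i j (1:ℂ)) * U : Matrix (Fin d) (Fin d) ℂ)) i j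
          + (((p/d:ℝ):ℂ) * trace (W (Matrix.single i j (1:ℂ)))) * (1 : Matrix (Fin d) (Fin d) ℂ) i j)
        - ((s:ℂ)-1) * ((Uᴴ * M (Matrix.single i j (1:ℂ)) * U : Matrix (Fin d) (Fin d) ℂ)) i j := by
    intro i j
    rw [hE]
    simp only [Matrix.mul_sub, Matrix.sub_mul, Matrix.mul_add, Matrix.add_mul,
      Matrix.mul_smul, Matrix.smul_mul, Matrix.mul_one, hUU,
      Matrix.sub_apply, Matrix.add_apply, Matrix.smul_apply, smul_eq_mul]
    try ring
  -- the three summed quantities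
  have hSW : (∑ i, ∑ j, ((Uᴴ * W (Matrix.single i j (1:ℂ)) * U
      : Matrix (Fin d) (Fin d) ℂ)) i j) = ((rW : ℝ) : ℂ) := by
    simp_rw [hKW2]
    exact channel_F U KW
  have hSM : (∑ i, ∑ j, ((Uᴴ * M (Matrix.single i j (1:ℂ)) * U
      : Matrix (Fin d) (Fin d) ℂ)) i j) = ((rM : ℝ) : ℂ) := by
    simp_rw [hKM2]
    exact channel_F U KM
  have htr1 : ∀ i : Fin d, trace (Matrix.single i i (1:ℂ)) = 1 := by
    intro i
    rw [Matrix.trace]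
    rw [Finset.sum_eq_single i]
    · simp
    · intro b _ hb
      simp [Matrix.diag, hb.symm]
    · simp
  have hTW : (∑ i, ∑ j, (((p/d:ℝ):ℂ) * trace (W (Matrix.single i j (1:ℂ))))
      * (1 : Matrix (Fin d) (Fin d) ℂ) i j) = ((p/d:ℝ):ℂ) * (d:ℂ) := by
    have hWtr : ∀ ρ, trace (W ρ) = trace ρ := channel_trace ⟨kW, KW, hKW1, hKW2⟩
    simp_rw [hWtr, Matrix.one_apply, mul_ite, mul_one, mul_zero, Finset.sum_ite_eq,
      Finset.mem_univ, if_true, htr1]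
    simp [Finset.sum_const, mul_comm]
  -- the main complex identity
  have hmain : (((d:ℝ)^2 : ℝ) : ℂ)
      = (s:ℂ) * (((1-p:ℝ):ℂ) * ((rW : ℝ) : ℂ) + ((p/d:ℝ):ℂ) * (d:ℂ)) - ((s:ℂ)-1) * ((rM : ℝ) : ℂ) := by
    calc (((d:ℝ)^2 : ℝ) : ℂ)
        = ∑ i : Fin d, ∑ j : Fin d, ((Uᴴ * (U * Matrix.single i j (1:ℂ) * Uᴴ) * U
            : Matrix (Fin d) (Fin d) ℂ)) i j := by
          simp_rw [hL]
          simp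
          try push_cast
          try ring
      _ = ∑ i : Fin d, ∑ j : Fin d,
            ((Uᴴ * ((s:ℂ) • E (W (Matrix.single i j (1:ℂ))) - ((s:ℂ)-1) • M (Matrix.single i j (1:ℂ))) * U
              : Matrix (Fin d) (Fin d) ℂ)) i j := by
          refine Finset.sum_congr rfl fun i _ => Finset.sum_congr rfl fun j _ => ?_
          rw [hdecomp]
      _ = (s:ℂ) * (((1-p:ℝ):ℂ) * ((rW : ℝ) : ℂ) + ((p/d:ℝ):ℂ) * (d:ℂ)) - ((s:ℂ)-1) * ((rM : ℝ) : ℂ) := by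
          simp_rw [hRpoint]
          simp only [Finset.sum_sub_distrib, Finset.sum_add_distrib, ← Finset.mul_sum]
          rw [hSW, hTW, hSM]
  have hreal : (d:ℝ)^2 = s * ((1-p) * rW + (p/d) * d) - (s-1) * rM := by
    exact_mod_cast hmain
  have hd2 : (2:ℝ) ≤ (d:ℝ) := by exact_mod_cast hd
  have hpd : p / (d:ℝ) * (d:ℝ) = p := by
    field_simp
  rw [hpd] at hreal
  have hd4 : (4:ℝ) ≤ (d:ℝ)^2 := by nlinarith
  have hA : 0 < (d:ℝ)^2 + p - (d:ℝ)^2 * p := by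
    nlinarith [mul_nonneg (sub_nonneg.2 hp1) (sub_nonneg.2 hd4)]
  rw [ge_iff_le, div_le_iff₀ hA]
  nlinarith [mul_nonneg (sub_nonneg.2 hs) hrM0,
    mul_nonneg (mul_nonneg (le_trans zero_le_one hs) (sub_nonneg.2 hp1)) (sub_nonneg.2 hrWd)]
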